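/- Let 0 < c < 1. Let (Fₙ) be a sequence of c-defective distribution functions, and let G and G* be nondegenerate c-defective distribution functions. Suppose aₙ > 0, bₙ ∈ ℝ, αₙ > 0, βₙ ∈ ℝ are such that Fₙ(aₙ·x + bₙ) → G(x) as n → ∞ at every continuity point x of G, and Fₙ(αₙ·x + βₙ) → G*(x) as n → ∞ at every continuity point x of G*. Then there exist a > 0 and b ∈ ℝ such that αₙ/aₙ → a, (βₙ − bₙ)/aₙ → b, and G*(x) = G(a·x + b) for all x ∈ ℝ. -/

import Mathlib

open Filter Topology

/-- A `c`-defective distribution function: nondecreasing, right continuous,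
tending to `1` at `+∞` and to `c` at `-∞`. -/
def IsDefectiveDF (c : ℝ) (H : ℝ → ℝ) : Prop :=
  Monotone H ∧ (∀ x, ContinuousWithinAt H (Set.Ici x) x) ∧
    Tendsto H atTop (𝓝 1) ∧ Tendsto H atBot (𝓝 c)

/-- In any nonempty open interval there is a point outside a given countable set. -/
lemma exists_notMem_of_countable {D : Set ℝ} (hD : D.Countable) {s t : ℝ} (h : s < t) :
    ∃ z, s < z ∧ z < t ∧ z ∉ D := by
  by_contra hcon
  push_neg at hcon
  have hsub : Set.Ioo s t ⊆ D := fun z hz => hcon z hz.1 hz.2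
  have hcnt : (Set.Ioo s t).Countable := hD.mono hsub
  rw [← Cardinal.le_aleph0_iff_set_countable, Cardinal.mk_Ioo_real h] at hcnt
  exact Cardinal.aleph0_lt_continuum.not_ge hcnt

/-- A monotone real function has continuity points in any nonempty open interval. -/
lemma monotone_dense_cont (G : ℝ → ℝ) (hm : Monotone G) {s t : ℝ} (h : s < t) :
    ∃ z, s < z ∧ z < t ∧ ContinuousAt G z := by
  obtain ⟨z, h1, h2, h3⟩ := exists_notMem_of_countable hm.countable_not_continuousAt h
  exact ⟨z, h1, h2, not_not.mp h3⟩

lemma defective_bounds {c : ℝ} {G : ℝ → ℝ} (hG : IsDefectiveDF c G) (x : ℝ) :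
    c ≤ G x ∧ G x ≤ 1 := by
  constructor
  · refine le_of_tendsto hG.2.2.2 ?_
    filter_upwards [eventually_le_atBot x] with y hy using hG.1 hy
  · refine ge_of_tendsto hG.2.2.1 ?_
    filter_upwards [eventually_ge_atTop x] with y hy using hG.1 hy

/-- Core rigidity: a nondegenerate defective df cannot satisfy `G (u y + v) = G y`
with `0 < u < 1`. -/
lemma rigid_lt_one {c : ℝ} {G : ℝ → ℝ} (hG : IsDefectiveDF c G) (hc1 : c < 1)
    (hGnd : ∃ x, c < G x ∧ G x < 1)
    {u v : ℝ} (hu0 : 0 < u) (hu1 : u < 1)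
    (heq : ∀ y, G (u * y + v) = G y) : False := by
  have h1u : (1 : ℝ) - u ≠ 0 := by linarith [hu1]
  obtain ⟨s, hsv⟩ : ∃ s : ℝ, s * (1 - u) = v := ⟨v / (1 - u), div_mul_cancel₀ v h1u⟩
  have hfix : u * s + v = s := by linear_combination (-1 : ℝ) * hsv
  have hiter : ∀ (y : ℝ) (n : ℕ), G (u ^ n * (y - s) + s) = G y := by
    intro y n
    induction n with
    | zero => simp
    | succ n ih =>
      have he : u ^ (n + 1) * (y - s) + s = u * (u ^ n * (y - s) + s) + v := by
        linear_combination hsv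
      rw [he, heq, ih]
  have hpow : ∀ y : ℝ, Tendsto (fun n : ℕ => u ^ n * (y - s) + s) atTop (𝓝 s) := by
    intro y
    have := ((tendsto_pow_atTop_nhds_zero_of_lt_one hu0.le hu1).mul_const (y - s)).add_const s
    simpa using this
  -- for y ≥ s, G y = G s
  have hup : ∀ y, s ≤ y → G y = G s := by
    intro y hy
    rcases eq_or_lt_of_le hy with h | h
    · rw [← h]
    · have hmem : ∀ n : ℕ, u ^ n * (y - s) + s ∈ Set.Ici s := by
        intro n
        have : 0 ≤ u ^ n * (y - s) := mul_nonneg (pow_nonneg hu0.le n) (by linarith)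
        simp only [Set.mem_Ici]; linarith
      have htend : Tendsto (fun n : ℕ => u ^ n * (y - s) + s) atTop (𝓝[Set.Ici s] s) :=
        tendsto_nhdsWithin_of_tendsto_nhds_of_eventually_within _ (hpow y)
          (Eventually.of_forall hmem)
      have h1 : Tendsto (fun n : ℕ => G (u ^ n * (y - s) + s)) atTop (𝓝 (G s)) :=
        (hG.2.1 s).tendsto.comp htend
      have h2 : Tendsto (fun n : ℕ => G (u ^ n * (y - s) + s)) atTop (𝓝 (G y)) := by
        simp only [hiter]; exact tendsto_const_nhds
      exact tendsto_nhds_unique h2 h1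
  -- G s = 1
  have hGs1 : G s = 1 := by
    have : Tendsto G atTop (𝓝 (G s)) := by
      refine Tendsto.congr' ?_ (tendsto_const_nhds (α := ℝ) (x := G s))
      filter_upwards [eventually_ge_atTop s] with y hy
      exact (hup y hy).symm
    exact (tendsto_nhds_unique this hG.2.2.1)
  -- for y' < s, G y' = c
  have hdown : ∀ y', y' < s → G y' = c := by
    intro y' hy'
    -- for all y < y' < s, G y = G y'
    have hconst : ∀ y, y < y' → G y = G y' := by
      intro y hy
      -- G y = G (u^n (y-s) + s) which eventually exceeds y'
      have hev : ∀ᶠ n : ℕ in atTop, y' < u ^ n * (y - s) + s :=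
        (hpow y).eventually_const_lt hy'
      obtain ⟨n, hn⟩ := hev.exists
      have h1 : G y' ≤ G y := by
        rw [← hiter y n]; exact hG.1 hn.le
      exact le_antisymm (hG.1 hy.le) h1
    have : Tendsto G atBot (𝓝 (G y')) := by
      refine Tendsto.congr' ?_ (tendsto_const_nhds (α := ℝ) (x := G y'))
      filter_upwards [eventually_lt_atBot y'] with y hy
      exact (hconst y hy).symm
    exact (tendsto_nhds_unique this hG.2.2.2)
  obtain ⟨x₁, hx1, hx2⟩ := hGnd
  rcases lt_or_ge x₁ s with h | h
  · rw [hdown x₁ h] at hx1; exact lt_irrefl _ hx1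
  · rw [hup x₁ h, hGs1] at hx2; exact lt_irrefl _ hx2

/-- Rigidity: if a nondegenerate defective df satisfies `G (u y + v) = G y` with `u > 0`,
then `u = 1` and `v = 0`. -/
lemma rigidity {c : ℝ} {G : ℝ → ℝ} (hG : IsDefectiveDF c G) (hc1 : c < 1)
    (hGnd : ∃ x, c < G x ∧ G x < 1)
    {u v : ℝ} (hu0 : 0 < u) (heq : ∀ y, G (u * y + v) = G y) : u = 1 ∧ v = 0 := by
  rcases lt_trichotomy u 1 with h | h | h
  · exact absurd (rigid_lt_one hG hc1 hGnd hu0 h heq) id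
  · subst h
    refine ⟨rfl, ?_⟩
    by_contra hv
    have hiter : ∀ (y : ℝ) (n : ℕ), G (y + n * v) = G y := by
      intro y n
      induction n with
      | zero => simp
      | succ n ih =>
        have he : y + (n + 1 : ℕ) * v = 1 * (y + n * v) + v := by push_cast; ring
        rw [he, heq, ih]
    rcases lt_or_gt_of_ne hv with h | h
    · -- v < 0 : G y = c for all y
      have hGyc : ∀ y, G y = c := by
        intro y
        have ht : Tendsto (fun n : ℕ => y + (n : ℝ) * v) atTop atBot := by
          apply tendsto_atBot_add_const_left
          exact Tendsto.atTop_mul_const_of_neg h tendsto_natCast_atTop_atTop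
        have h1 : Tendsto (fun n : ℕ => G (y + (n : ℝ) * v)) atTop (𝓝 c) :=
          hG.2.2.2.comp ht
        have h2 : Tendsto (fun n : ℕ => G (y + (n : ℝ) * v)) atTop (𝓝 (G y)) := by
          simp only [hiter]; exact tendsto_const_nhds
        exact tendsto_nhds_unique h2 h1
      have : Tendsto G atTop (𝓝 c) := by
        refine Tendsto.congr' ?_ (tendsto_const_nhds (α := ℝ) (x := c))
        filter_upwards with y using (hGyc y).symm
      have := tendsto_nhds_unique this hG.2.2.1
      exact absurd this (by linarith)
    · -- v > 0 : G y = 1 for all y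
      have hGy1 : ∀ y, G y = 1 := by
        intro y
        have ht : Tendsto (fun n : ℕ => y + (n : ℝ) * v) atTop atTop := by
          apply tendsto_atTop_add_const_left
          exact Tendsto.atTop_mul_const h tendsto_natCast_atTop_atTop
        have h1 : Tendsto (fun n : ℕ => G (y + (n : ℝ) * v)) atTop (𝓝 1) :=
          hG.2.2.1.comp ht
        have h2 : Tendsto (fun n : ℕ => G (y + (n : ℝ) * v)) atTop (𝓝 (G y)) := by
          simp only [hiter]; exact tendsto_const_nhds
        exact tendsto_nhds_unique h2 h1
      have : Tendsto G atBot (𝓝 1) := by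
        refine Tendsto.congr' ?_ (tendsto_const_nhds (α := ℝ) (x := 1))
        filter_upwards with y using (hGy1 y).symm
      have := tendsto_nhds_unique this hG.2.2.2
      exact absurd this (by linarith)
  · -- u > 1 : reduce to u⁻¹ < 1
    have hune : u ≠ 0 := hu0.ne'
    have heq' : ∀ y, G (u⁻¹ * y + (-v / u)) = G y := by
      intro y
      have h0 := heq (u⁻¹ * y + (-v / u))
      rw [show u * (u⁻¹ * y + (-v / u)) + v = y by field_simp; ring] at h0
      exact h0.symm
    exact absurd (rigid_lt_one hG hc1 hGnd (inv_pos.mpr hu0)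
      (inv_lt_one_of_one_lt₀ h) heq') id

/-- Comparison: if `H n (z n) → L` and `H n M → L'` with `L < L'` and each `H n` monotone,
then eventually `z n ≤ M`. -/
lemma eventually_le_of_lim_lt {H : ℕ → ℝ → ℝ} (hm : ∀ n, Monotone (H n))
    {z : ℕ → ℝ} {M L L' : ℝ}
    (hL : Tendsto (fun n => H n (z n)) atTop (𝓝 L))
    (hL' : Tendsto (fun n => H n M) atTop (𝓝 L')) (h : L < L') :
    ∀ᶠ n in atTop, z n ≤ M := by
  obtain ⟨d, hd1, hd2⟩ := exists_between h
  filter_upwards [hL.eventually_lt_const hd1, hL'.eventually_const_lt hd2] with n h1 h2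
  by_contra hzM
  exact absurd (hm n (le_of_not_ge hzM)) (not_le.mpr (lt_trans h1 h2))

lemma eventually_ge_of_lt_lim {H : ℕ → ℝ → ℝ} (hm : ∀ n, Monotone (H n))
    {z : ℕ → ℝ} {m L L' : ℝ}
    (hL : Tendsto (fun n => H n (z n)) atTop (𝓝 L))
    (hL' : Tendsto (fun n => H n m) atTop (𝓝 L')) (h : L' < L) :
    ∀ᶠ n in atTop, m ≤ z n := by
  obtain ⟨d, hd1, hd2⟩ := exists_between h
  filter_upwards [hL.eventually_const_lt hd2, hL'.eventually_lt_const hd1] with n h1 h2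
  by_contra hzm
  exact absurd (hm n (le_of_not_ge hzm)) (not_le.mpr (lt_trans h2 h1))

set_option maxHeartbeats 1000000 in
theorem khintchine_law_of_types_defective
    (c : ℝ) (hc0 : 0 < c) (hc1 : c < 1)
    (F : ℕ → ℝ → ℝ) (hF : ∀ n, IsDefectiveDF c (F n))
    (G Gs : ℝ → ℝ) (hG : IsDefectiveDF c G) (hGs : IsDefectiveDF c Gs)
    (hGnd : ∃ x, c < G x ∧ G x < 1) (hGsnd : ∃ x, c < Gs x ∧ Gs x < 1)
    (a b α β : ℕ → ℝ) (ha : ∀ n, 0 < a n) (hα : ∀ n, 0 < α n)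
    (h1 : ∀ x : ℝ, ContinuousAt G x →
      Tendsto (fun n => F n (a n * x + b n)) atTop (𝓝 (G x)))
    (h2 : ∀ x : ℝ, ContinuousAt Gs x →
      Tendsto (fun n => F n (α n * x + β n)) atTop (𝓝 (Gs x))) :
    ∃ A B : ℝ, 0 < A ∧
      Tendsto (fun n => α n / a n) atTop (𝓝 A) ∧
      Tendsto (fun n => (β n - b n) / a n) atTop (𝓝 B) ∧
      ∀ x : ℝ, Gs x = G (A * x + B) := by
  classical
  set u : ℕ → ℝ := fun n => α n / a n with hu_def
  set v : ℕ → ℝ := fun n => (β n - b n) / a n with hv_def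
  have hupos : ∀ n, 0 < u n := fun n => div_pos (hα n) (ha n)
  set H : ℕ → ℝ → ℝ := fun n y => F n (a n * y + b n) with hH_def
  have hHm : ∀ n, Monotone (H n) := by
    intro n x y hxy
    exact (hF n).1 (by nlinarith [ha n])
  have hH1 : ∀ x, ContinuousAt G x → Tendsto (fun n => H n x) atTop (𝓝 (G x)) := h1
  have hH2 : ∀ x, ContinuousAt Gs x →
      Tendsto (fun n => H n (u n * x + v n)) atTop (𝓝 (Gs x)) := by
    intro x hx
    have hkey : ∀ n, H n (u n * x + v n) = F n (α n * x + β n) := by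
      intro n
      simp only [hH_def, hu_def, hv_def]
      congr 1
      field_simp [(ha n).ne']
      ring
    simpa only [hkey] using h2 x hx
  -- two continuity points t₁ < t₂ of Gs with values in (c, 1)
  obtain ⟨x₀, hx₀1, hx₀2⟩ := hGsnd
  have hev1 : Gs ⁻¹' Set.Iio 1 ∈ 𝓝[Set.Ici x₀] x₀ := (hGs.2.1 x₀) (Iio_mem_nhds hx₀2)
  obtain ⟨d, hd, hsub⟩ := (mem_nhdsGE_iff_exists_Ico_subset).mp hev1
  obtain ⟨t₁, ht₁1, ht₁2, ht₁c⟩ := monotone_dense_cont Gs hGs.1 hd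
  obtain ⟨t₂, ht₂1, ht₂2, ht₂c⟩ := monotone_dense_cont Gs hGs.1 ht₁2
  have ht₁v : c < Gs t₁ ∧ Gs t₁ < 1 :=
    ⟨lt_of_lt_of_le hx₀1 (hGs.1 ht₁1.le), hsub ⟨ht₁1.le, ht₁2⟩⟩
  have ht₂v : c < Gs t₂ ∧ Gs t₂ < 1 :=
    ⟨lt_of_lt_of_le hx₀1 (hGs.1 (ht₁1.trans ht₂1).le),
     hsub ⟨(ht₁1.trans ht₂1).le, ht₂2⟩⟩
  -- boundedness of u n * t + v n for continuity points t with value in (c,1)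
  have hbnd : ∀ t, ContinuousAt Gs t → c < Gs t → Gs t < 1 →
      ∃ m M : ℝ, ∀ᶠ n in atTop, u n * t + v n ∈ Set.Icc m M := by
    intro t htc htl htu
    -- M : continuity point of G with Gs t < G M
    obtain ⟨y₀, hy₀⟩ := (hG.2.2.1.eventually_const_lt htu).exists
    obtain ⟨M, hM1, _, hMc⟩ := monotone_dense_cont G hG.1 (lt_add_one y₀)
    have hMval : Gs t < G M := lt_of_lt_of_le hy₀ (hG.1 hM1.le)
    obtain ⟨y₁, hy₁⟩ := (hG.2.2.2.eventually_lt_const htl).exists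
    obtain ⟨m, _, hm2, hmc⟩ := monotone_dense_cont G hG.1 (sub_one_lt y₁)
    have hmval : G m < Gs t := lt_of_le_of_lt (hG.1 hm2.le) hy₁
    refine ⟨m, M, ?_⟩
    filter_upwards [eventually_le_of_lim_lt hHm (hH2 t htc) (hH1 M hMc) hMval,
      eventually_ge_of_lt_lim hHm (hH2 t htc) (hH1 m hmc) hmval] with n hn1 hn2
    exact ⟨hn2, hn1⟩
  obtain ⟨m₁, M₁, hb₁⟩ := hbnd t₁ ht₁c ht₁v.1 ht₁v.2
  obtain ⟨m₂, M₂, hb₂⟩ := hbnd t₂ ht₂c ht₂v.1 ht₂v.2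
  -- compact region for the pair sequence
  set K : ℝ := (M₂ - m₁) / (t₂ - t₁) with hK_def
  set L : ℝ := |m₁| + |M₁| + K * |t₁| with hL_def
  set S : Set (ℝ × ℝ) := Set.Icc (0 : ℝ) K ×ˢ Set.Icc (-L) L with hS_def
  have hScomp : IsCompact S := (isCompact_Icc).prod isCompact_Icc
  have ht12 : t₁ < t₂ := ht₂1
  have hS : ∀ᶠ n in atTop, (u n, v n) ∈ S := by
    filter_upwards [hb₁, hb₂] with n hn1 hn2
    obtain ⟨hn1a, hn1b⟩ := hn1
    obtain ⟨hn2a, hn2b⟩ := hn2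
    have huK : u n ≤ K := by
      rw [hK_def, le_div_iff₀ (by linarith)]
      nlinarith
    have hut : |u n * t₁| ≤ K * |t₁| := by
      rw [abs_mul]
      exact mul_le_mul_of_nonneg_right (by
        rw [abs_of_pos (hupos n)]; exact huK) (abs_nonneg _)
    have habs := abs_le.mp hut
    constructor
    · exact ⟨(hupos n).le, huK⟩
    · constructor
      · have := neg_abs_le m₁
        simp only [hL_def]
        nlinarith [abs_nonneg M₁]
      · have := le_abs_self M₁
        simp only [hL_def]
        nlinarith [abs_nonneg m₁]
  -- key subsequence lemma
  have key : ∀ (φ : ℕ → ℕ), Tendsto φ atTop atTop → ∀ A B : ℝ,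
      Tendsto (fun n => u (φ n)) atTop (𝓝 A) → Tendsto (fun n => v (φ n)) atTop (𝓝 B) →
      0 < A ∧ ∀ x, Gs x = G (A * x + B) := by
    intro φ hφ A B hA hB
    have hA0 : 0 ≤ A := ge_of_tendsto' hA fun n => (hupos (φ n)).le
    have hcomp : ∀ x, ContinuousAt Gs x →
        (∀ z, A * x + B < z → ContinuousAt G z → Gs x ≤ G z) ∧
        (∀ z, z < A * x + B → ContinuousAt G z → G z ≤ Gs x) := by
      intro x hx
      have hz : Tendsto (fun n => u (φ n) * x + v (φ n)) atTop (𝓝 (A * x + B)) :=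
        (hA.mul_const x).add hB
      have hlim : Tendsto (fun n => H (φ n) (u (φ n) * x + v (φ n))) atTop (𝓝 (Gs x)) := by
        have := (hH2 x hx).comp hφ
        simpa [Function.comp_def] using this
      constructor
      · intro z hz' hzc
        have hev : ∀ᶠ n in atTop, u (φ n) * x + v (φ n) ≤ z :=
          (hz.eventually_lt_const hz').mono fun n hn => hn.le
        have hGz : Tendsto (fun n => H (φ n) z) atTop (𝓝 (G z)) := by
          have := (hH1 z hzc).comp hφ
          simpa [Function.comp_def] using this
        refine le_of_tendsto_of_tendsto hlim hGz ?_
        filter_upwards [hev] with n hn using hHm (φ n) hn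
      · intro z hz' hzc
        have hev : ∀ᶠ n in atTop, z ≤ u (φ n) * x + v (φ n) :=
          (hz.eventually_const_lt hz').mono fun n hn => hn.le
        have hGz : Tendsto (fun n => H (φ n) z) atTop (𝓝 (G z)) := by
          have := (hH1 z hzc).comp hφ
          simpa [Function.comp_def] using this
        refine le_of_tendsto_of_tendsto hGz hlim ?_
        filter_upwards [hev] with n hn using hHm (φ n) hn
    have hApos : 0 < A := by
      rcases hA0.lt_or_eq with h | h
      · exact h
      exfalso
      -- A = 0 : G would be degenerate
      have hzero : ∀ x, ContinuousAt Gs x →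
          (∀ z, B < z → ContinuousAt G z → Gs x ≤ G z) ∧
          (∀ z, z < B → ContinuousAt G z → G z ≤ Gs x) := by
        intro x hx
        have := hcomp x hx
        rw [← h, zero_mul, zero_add] at this
        exact this
      -- G z = 1 for continuity points z > B
      have hhigh : ∀ z, B < z → ContinuousAt G z → (1 : ℝ) ≤ G z := by
        intro z hz hzc
        by_contra hlt
        push_neg at hlt
        obtain ⟨y, hy⟩ := (hGs.2.2.1.eventually_const_lt hlt).exists
        obtain ⟨x, hx1, _, hxc⟩ := monotone_dense_cont Gs hGs.1 (lt_add_one y)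
        have : Gs x ≤ G z := (hzero x hxc).1 z hz hzc
        have : G z < Gs x := lt_of_lt_of_le hy (hGs.1 hx1.le)
        linarith
      have hlow : ∀ z, z < B → ContinuousAt G z → G z ≤ c := by
        intro z hz hzc
        by_contra hlt
        push_neg at hlt
        obtain ⟨y, hy⟩ := (hGs.2.2.2.eventually_lt_const hlt).exists
        obtain ⟨x, _, hx2, hxc⟩ := monotone_dense_cont Gs hGs.1 (sub_one_lt y)
        have : G z ≤ Gs x := (hzero x hxc).2 z hz hzc
        have : Gs x < G z := lt_of_le_of_lt (hGs.1 hx2.le) hy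
        linarith
      -- G is degenerate : contradiction
      obtain ⟨x₁, hx1, hx2⟩ := hGnd
      have hub := defective_bounds hG
      have h1' : ∀ z, B < z → G z = 1 := by
        intro z hz
        obtain ⟨w, hw1, hw2, hw3⟩ := monotone_dense_cont G hG.1 hz
        exact le_antisymm (hub z).2 ((hhigh w hw1 hw3).trans (hG.1 hw2.le))
      have hc' : ∀ z, z < B → G z = c := by
        intro z hz
        obtain ⟨w, hw1, hw2, hw3⟩ := monotone_dense_cont G hG.1 hz
        exact le_antisymm ((hG.1 hw1.le).trans (hlow w hw2 hw3)) (hub z).1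
      have hB1 : G B = 1 := by
        have hcw : Tendsto G (𝓝[>] B) (𝓝 (G B)) :=
          (hG.2.1 B).tendsto.mono_left (nhdsWithin_mono B Set.Ioi_subset_Ici_self)
        have h2' : Tendsto G (𝓝[>] B) (𝓝 1) := by
          refine Tendsto.congr' ?_ (tendsto_const_nhds (α := ℝ) (x := 1))
          filter_upwards [self_mem_nhdsWithin] with z hz
          exact (h1' z hz).symm
        exact tendsto_nhds_unique hcw h2'
      rcases lt_trichotomy x₁ B with hx | hx | hx
      · rw [hc' x₁ hx] at hx1; exact lt_irrefl _ hx1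
      · rw [hx, hB1] at hx2; exact lt_irrefl _ hx2
      · rw [h1' x₁ hx] at hx2; exact lt_irrefl _ hx2
    refine ⟨hApos, ?_⟩
    -- equality at joint continuity points
    have heq0 : ∀ x, ContinuousAt Gs x → ContinuousAt G (A * x + B) →
        Gs x = G (A * x + B) := by
      intro x hx hxc
      obtain ⟨hle, hge⟩ := hcomp x hx
      set w : ℝ := A * x + B
      have hstep : ∀ ε : ℝ, 0 < ε → Gs x ≤ G w + ε ∧ G w - ε ≤ Gs x := by
        intro ε hε
        obtain ⟨δ, hδ, hδ'⟩ := Metric.continuousAt_iff.mp hxc ε hε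
        obtain ⟨z, hz1, hz2, hzc⟩ := monotone_dense_cont G hG.1
          (show w < w + δ by linarith)
        obtain ⟨z', hz'1, hz'2, hz'c⟩ := monotone_dense_cont G hG.1
          (show w - δ < w by linarith)
        have hdz : dist z w < δ := by
          rw [Real.dist_eq, abs_of_pos (by linarith : (0:ℝ) < z - w)]; linarith
        have hdz' : dist z' w < δ := by
          rw [Real.dist_eq, abs_of_neg (by linarith : z' - w < 0)]; linarith
        have h1 := hδ' hdz
        have h2 := hδ' hdz'
        rw [Real.dist_eq, abs_lt] at h1 h2
        constructor
        · have := hle z hz1 hzc; linarith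
        · have := hge z' hz'2 hz'c; linarith
      have hle' : Gs x ≤ G w := by
        by_contra hlt
        push_neg at hlt
        have := (hstep ((Gs x - G w) / 2) (by linarith)).1
        linarith
      have hge' : G w ≤ Gs x := by
        by_contra hlt
        push_neg at hlt
        have := (hstep ((G w - Gs x) / 2) (by linarith)).2
        linarith
      exact le_antisymm hle' hge'
    -- extend to all points by right continuity
    intro x
    set w : ℝ := A * x + B with hw_def
    have hbad : ({t | ¬ContinuousAt Gs t} ∪
        (fun z => (z - B) / A) '' {z | ¬ContinuousAt G z}).Countable :=
      (hGs.1.countable_not_continuousAt).union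
        ((hG.1.countable_not_continuousAt).image _)
    have hstep : ∀ ε : ℝ, 0 < ε → dist (Gs x) (G w) ≤ 2 * ε := by
      intro ε hε
      obtain ⟨δ₁, hδ₁, hδ₁'⟩ := Metric.continuousWithinAt_iff.mp (hGs.2.1 x) ε hε
      obtain ⟨δ₂, hδ₂, hδ₂'⟩ := Metric.continuousWithinAt_iff.mp (hG.2.1 w) ε hε
      set η : ℝ := min δ₁ (δ₂ / A) with hη_def
      have hη : 0 < η := lt_min hδ₁ (div_pos hδ₂ hApos)
      obtain ⟨y, hy1, hy2, hy3⟩ := exists_notMem_of_countable hbad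
        (show x < x + η by linarith)
      simp only [Set.mem_union, Set.mem_image, Set.mem_setOf_eq, not_or, not_exists,
        not_and] at hy3
      obtain ⟨hyc, hyim⟩ := hy3
      have hycGs : ContinuousAt Gs y := not_not.mp hyc
      have hycG : ContinuousAt G (A * y + B) := by
        by_contra hcon
        exact (hyim (A * y + B) hcon) (by field_simp; ring)
      have hEq := heq0 y hycGs hycG
      have hd1 : dist (Gs y) (Gs x) < ε := by
        apply hδ₁' (Set.mem_Ici.mpr hy1.le)
        rw [Real.dist_eq, abs_of_pos (by linarith : (0:ℝ) < y - x)]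
        have : η ≤ δ₁ := min_le_left _ _
        linarith
      have hd2 : dist (G (A * y + B)) (G w) < ε := by
        apply hδ₂' (Set.mem_Ici.mpr (by rw [hw_def]; nlinarith))
        rw [Real.dist_eq, hw_def]
        have harg : A * y + B - (A * x + B) = A * (y - x) := by ring
        rw [harg, abs_of_pos (by nlinarith : (0:ℝ) < A * (y - x))]
        have h1 : η ≤ δ₂ / A := min_le_right _ _
        have h2 : y - x < δ₂ / A := by linarith
        calc A * (y - x) < A * (δ₂ / A) := by
              exact mul_lt_mul_of_pos_left h2 hApos
          _ = δ₂ := by field_simp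
      calc dist (Gs x) (G w) ≤ dist (Gs x) (Gs y) + dist (Gs y) (G w) := dist_triangle _ _ _
        _ = dist (Gs y) (Gs x) + dist (G (A * y + B)) (G w) := by rw [dist_comm, hEq]
        _ ≤ ε + ε := by linarith
        _ = 2 * ε := by ring
    have hdist : dist (Gs x) (G w) ≤ 0 := by
      by_contra hlt
      push_neg at hlt
      have := hstep (dist (Gs x) (G w) / 4) (by linarith)
      linarith
    exact dist_le_zero.mp hdist
  -- uniqueness of the limiting pair
  have huniq : ∀ A B A' B' : ℝ, 0 < A → 0 < A' →
      (∀ x, Gs x = G (A * x + B)) → (∀ x, Gs x = G (A' * x + B')) →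
      A = A' ∧ B = B' := by
    intro A B A' B' hA hA' hE hE'
    have hAne : A ≠ 0 := hA.ne'
    have heqr : ∀ y, G ((A' / A) * y + (B' - A' * B / A)) = G y := by
      intro y
      have h0 := (hE ((y - B) / A)).symm.trans (hE' ((y - B) / A))
      rw [show A * ((y - B) / A) + B = y by field_simp; ring] at h0
      rw [show A' * ((y - B) / A) + B' = (A' / A) * y + (B' - A' * B / A) by
        field_simp; ring] at h0
      exact h0.symm
    obtain ⟨hu1, hv0⟩ := rigidity hG hc1 hGnd (div_pos hA' hA) heqr
    have hAA : A = A' := by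
      field_simp at hu1
      exact hu1.symm
    have hB' : B' = B := by
      have h3 : B' = A' * B / A := by linarith
      rw [h3, ← hAA, mul_comm, mul_div_assoc, div_self hAne, mul_one]
    exact ⟨hAA, hB'.symm⟩
  -- extract a convergent subsequence to define A, B
  obtain ⟨⟨A, B⟩, _, φ, hφmono, hφlim⟩ := hScomp.tendsto_subseq' hS.frequently
  have hAlim : Tendsto (fun n => u (φ n)) atTop (𝓝 A) := by
    have := (continuous_fst.tendsto (A, B)).comp hφlim
    simpa [Function.comp_def] using this
  have hBlim : Tendsto (fun n => v (φ n)) atTop (𝓝 B) := by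
    have := (continuous_snd.tendsto (A, B)).comp hφlim
    simpa [Function.comp_def] using this
  obtain ⟨hApos, hABeq⟩ := key φ hφmono.tendsto_atTop A B hAlim hBlim
  have hpair : Tendsto (fun n => (u n, v n)) atTop (𝓝 (A, B)) := by
    apply tendsto_of_subseq_tendsto
    intro ns hns
    have hfreq : ∃ᶠ n in atTop, (u (ns n), v (ns n)) ∈ S := (hns.eventually hS).frequently
    obtain ⟨⟨A', B'⟩, _, ψ, hψ, hψlim⟩ := hScomp.tendsto_subseq' hfreq
    have hA' : Tendsto (fun n => u (ns (ψ n))) atTop (𝓝 A') := by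
      have := (continuous_fst.tendsto (A', B')).comp hψlim
      simpa [Function.comp_def] using this
    have hB' : Tendsto (fun n => v (ns (ψ n))) atTop (𝓝 B') := by
      have := (continuous_snd.tendsto (A', B')).comp hψlim
      simpa [Function.comp_def] using this
    obtain ⟨hA'pos, hE'⟩ := key (fun n => ns (ψ n)) (hns.comp hψ.tendsto_atTop) A' B' hA' hB'
    obtain ⟨hAA, hBB⟩ := huniq A B A' B' hApos hA'pos hABeq hE'
    refine ⟨ψ, ?_⟩
    rw [hAA, hBB]
    simpa [Function.comp_def] using hψlim
  refine ⟨A, B, hApos, ?_, ?_, hABeq⟩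
  · have := (continuous_fst.tendsto (A, B)).comp hpair
    simpa [Function.comp_def] using this
  · have := (continuous_snd.tendsto (A, B)).comp hpair
    simpa [Function.comp_def] using this
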